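/- Let f be an entropy function such that 1 is the unique minimizer of f, and let ν ∈ M_+(ℝ^d). Then for every B ≥ 0 the sublevel set { μ ∈ M_+(ℝ^d) : D_f(μ|ν) ≤ B } is bounded in total variation norm, i.e., there is C = C(B, ν, f) < ∞ with μ(ℝ^d) ≤ C for all μ in this set. -/

import Mathlib

open MeasureTheory ENNReal Filter Topology Set
open scoped ZeroAtInfty RealInnerProductSpace BoundedContinuousFunction

noncomputable section

/-- Euclidean space `ℝ^d`. -/
abbrev Rd (d : ℕ) : Type := EuclideanSpace ℝ (Fin d)

/-- An entropy function: a proper, convex, lower semicontinuous `f : ℝ → [0,∞]`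
with `f x = ∞` for `x < 0` and `f 1 = 0` (properness is automatic from `f 1 = 0`). -/
structure IsEntropy (f : ℝ → ℝ≥0∞) : Prop where
  convex : ∀ x y a b : ℝ, 0 ≤ a → 0 ≤ b → a + b = 1 →
    f (a * x + b * y) ≤ ENNReal.ofReal a * f x + ENNReal.ofReal b * f y
  lsc : LowerSemicontinuous f
  top_of_neg : ∀ x : ℝ, x < 0 → f x = ⊤
  one_eq_zero : f 1 = 0

/-- `1` is the unique minimizer of the entropy function `f`, i.e. `f t > 0` for `t ≠ 1`. -/
def UniqueMinOne (f : ℝ → ℝ≥0∞) : Prop := ∀ t : ℝ, t ≠ 1 → 0 < f t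

/-- The recession constant `f'_∞ = lim_{t → ∞} f t / t` (the limit exists for convex `f`,
so it coincides with the `limsup`). -/
noncomputable def recession (f : ℝ → ℝ≥0∞) : ℝ≥0∞ :=
  Filter.limsup (fun t : ℝ => f t / ENNReal.ofReal t) Filter.atTop

/-- The `f`-divergence of finite nonnegative measures:
`D_f(μ|ν) = ∫ f(dμ/dν) dν + f'_∞ · μˢ(ℝ^d)` where `μ = (dμ/dν) ν + μˢ`
is the Lebesgue decomposition of `μ` w.r.t. `ν` (convention `0 ⬝ ∞ = 0`). -/
noncomputable def fDiv {d : ℕ} (f : ℝ → ℝ≥0∞) (μ ν : Measure (Rd d)) : ℝ≥0∞ :=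
  ∫⁻ x, f ((μ.rnDeriv ν x).toReal) ∂ν + recession f * μ.singularPart ν Set.univ

/-- Linear growth of an entropy function beyond `2`. -/
lemma entropy_growth {f : ℝ → ℝ≥0∞} (hf : IsEntropy f) {t : ℝ} (ht : 2 ≤ t) :
    ENNReal.ofReal (t - 1) * f 2 ≤ f t := by
  rcases eq_or_lt_of_le ht with h | h
  · subst h; norm_num
  · have ht1 : (1 : ℝ) < t - 1 := by linarith
    have ht1' : (0 : ℝ) < t - 1 := by linarith
    set a : ℝ := (t - 2) / (t - 1) with ha_def
    set b : ℝ := 1 / (t - 1) with hb_def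
    have ha : 0 ≤ a := div_nonneg (by linarith) ht1'.le
    have hb : 0 ≤ b := by positivity
    have hab : a + b = 1 := by
      rw [ha_def, hb_def, ← add_div, show t - 2 + 1 = t - 1 by ring,
        div_self ht1'.ne']
    have h0 : t - 1 ≠ 0 := ht1'.ne'
    have hsum : a * 1 + b * t = 2 := by
      have h2 : a * 1 + b * t = (t - 2 + t) / (t - 1) := by
        rw [ha_def, hb_def]; ring
      rw [h2, show t - 2 + t = 2 * (t - 1) by ring, mul_div_assoc, div_self h0, mul_one]
    have hcvx := hf.convex 1 t a b ha hb hab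
    rw [hsum, hf.one_eq_zero, mul_zero, zero_add] at hcvx
    calc ENNReal.ofReal (t - 1) * f 2
        ≤ ENNReal.ofReal (t - 1) * (ENNReal.ofReal b * f t) := by
          exact mul_le_mul_right hcvx _
      _ = (ENNReal.ofReal (t - 1) * ENNReal.ofReal b) * f t := by ring
      _ = f t := by
          rw [← ENNReal.ofReal_mul ht1'.le]
          have : (t - 1) * b = 1 := by
            rw [hb_def, mul_one_div, div_self ht1'.ne']
          rw [this, ENNReal.ofReal_one, one_mul]

/-- If `1` is the unique minimizer of the entropy function `f`, then sublevel sets of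
`D_f(·|ν)` are bounded in total variation norm. -/
theorem fDiv_sublevel_tv_bounded {d : ℕ} (f : ℝ → ℝ≥0∞) (hf : IsEntropy f)
    (hmin : UniqueMinOne f) (ν : Measure (Rd d)) [IsFiniteMeasure ν]
    (B : ℝ) (hB : 0 ≤ B) :
    ∃ C : ℝ, ∀ μ : Measure (Rd d), IsFiniteMeasure μ →
      fDiv f μ ν ≤ ENNReal.ofReal B → (μ Set.univ).toReal ≤ C := by
  set c : ℝ≥0∞ := min (f 2) 1 with hc_def
  have hc_pos : 0 < c := lt_min (hmin 2 (by norm_num)) zero_lt_one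
  have hc_ne : c ≠ 0 := hc_pos.ne'
  have hc_ne_top : c ≠ ⊤ := ne_top_of_le_ne_top one_ne_top (min_le_right _ _)
  -- growth bound with constant `c`
  have hgrow : ∀ t : ℝ, 2 ≤ t → ENNReal.ofReal (t - 1) * c ≤ f t := fun t ht =>
    le_trans (mul_le_mul_right (min_le_left _ _) _) (entropy_growth hf ht)
  -- pointwise bound: ofReal t ≤ 2 + f t / c for t ≥ 0
  have hpt : ∀ t : ℝ, 0 ≤ t → ENNReal.ofReal t ≤ 2 + f t / c := by
    intro t ht0
    rcases le_or_gt t 2 with ht | ht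
    · calc ENNReal.ofReal t ≤ ENNReal.ofReal 2 := ENNReal.ofReal_le_ofReal ht
        _ ≤ 2 + f t / c := by simp
    · have h1 : ENNReal.ofReal (t - 1) ≤ f t / c :=
        (ENNReal.le_div_iff_mul_le (Or.inl hc_ne) (Or.inl hc_ne_top)).2 (hgrow t ht.le)
      calc ENNReal.ofReal t = ENNReal.ofReal ((t - 1) + 1) := by ring_nf
        _ = ENNReal.ofReal (t - 1) + 1 := by
            rw [ENNReal.ofReal_add (by linarith) zero_le_one, ENNReal.ofReal_one]
        _ ≤ f t / c + 1 := by gcongr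
        _ ≤ 2 + f t / c := by
            rw [add_comm]; gcongr; norm_num
  -- recession lower bound
  have hrec : c / 2 ≤ recession f := by
    have hev : ∀ᶠ t : ℝ in atTop, c / 2 ≤ f t / ENNReal.ofReal t := by
      filter_upwards [eventually_ge_atTop (2 : ℝ)] with t ht
      have ht0 : (0 : ℝ) < t := by linarith
      rw [ENNReal.le_div_iff_mul_le (Or.inl (by simp [ht0])) (Or.inl ENNReal.ofReal_ne_top)]
      calc c / 2 * ENNReal.ofReal t = c * (ENNReal.ofReal t / 2) := by
            rw [div_eq_mul_inv, div_eq_mul_inv]; ring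
        _ = c * ENNReal.ofReal (t / 2) := by
            rw [ENNReal.ofReal_div_of_pos (by norm_num)]; norm_num
        _ ≤ c * ENNReal.ofReal (t - 1) := by
            gcongr; linarith
        _ = ENNReal.ofReal (t - 1) * c := mul_comm _ _
        _ ≤ f t := hgrow t ht
    refine Filter.le_limsup_of_le (by isBoundedDefault) ?_
    intro b hb
    obtain ⟨t, ht1, ht2⟩ := (hev.and hb).exists
    exact ht1.trans ht2
  have hc2_ne : c / 2 ≠ 0 := by
    simp [ENNReal.div_eq_zero_iff, hc_ne]
  have hc2_ne_top : c / 2 ≠ ⊤ := by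
    simp [ENNReal.div_eq_top, hc_ne_top]
  -- the bound
  refine ⟨(2 * ν Set.univ + ENNReal.ofReal B / c + ENNReal.ofReal B / (c / 2)).toReal,
    fun μ hμ hle => ?_⟩
  have hmeas : Measurable fun x => f ((μ.rnDeriv ν x).toReal) :=
    hf.lsc.measurable.comp (μ.measurable_rnDeriv ν).ennreal_toReal
  have hInt : ∫⁻ x, f ((μ.rnDeriv ν x).toReal) ∂ν ≤ ENNReal.ofReal B :=
    le_trans (le_add_right le_rfl) hle
  have hSing : recession f * μ.singularPart ν Set.univ ≤ ENNReal.ofReal B :=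
    le_trans (le_add_left le_rfl) hle
  have hSing' : μ.singularPart ν Set.univ ≤ ENNReal.ofReal B / (c / 2) := by
    rw [ENNReal.le_div_iff_mul_le (Or.inl hc2_ne) (Or.inl hc2_ne_top)]
    calc μ.singularPart ν Set.univ * (c / 2)
        ≤ μ.singularPart ν Set.univ * recession f := mul_le_mul_right hrec _
      _ = recession f * μ.singularPart ν Set.univ := mul_comm _ _
      _ ≤ ENNReal.ofReal B := hSing
  have hdecomp : μ Set.univ
      = ∫⁻ x, μ.rnDeriv ν x ∂ν + μ.singularPart ν Set.univ := by
    haveI : μ.HaveLebesgueDecomposition ν := Measure.haveLebesgueDecomposition_of_sigmaFinite μ ν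
    conv_lhs => rw [← μ.rnDeriv_add_singularPart ν]
    rw [Measure.add_apply, withDensity_apply _ MeasurableSet.univ,
      Measure.restrict_univ]
  have hae : ∀ᵐ x ∂ν, μ.rnDeriv ν x = ENNReal.ofReal ((μ.rnDeriv ν x).toReal) := by
    filter_upwards [μ.rnDeriv_lt_top ν] with x hx
    rw [ENNReal.ofReal_toReal hx.ne]
  have hIntRn : ∫⁻ x, μ.rnDeriv ν x ∂ν ≤ 2 * ν Set.univ + ENNReal.ofReal B / c := by
    calc ∫⁻ x, μ.rnDeriv ν x ∂ν
        = ∫⁻ x, ENNReal.ofReal ((μ.rnDeriv ν x).toReal) ∂ν := lintegral_congr_ae hae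
      _ ≤ ∫⁻ x, 2 + f ((μ.rnDeriv ν x).toReal) / c ∂ν := by
          refine lintegral_mono fun x => hpt _ ENNReal.toReal_nonneg
      _ = 2 * ν Set.univ + (∫⁻ x, f ((μ.rnDeriv ν x).toReal) ∂ν) / c := by
          rw [lintegral_add_left measurable_const, lintegral_const]
          congr 1
          simp only [div_eq_mul_inv]
          exact lintegral_mul_const _ hmeas
      _ ≤ 2 * ν Set.univ + ENNReal.ofReal B / c := by
          gcongr
  have hfinal : μ Set.univ
      ≤ 2 * ν Set.univ + ENNReal.ofReal B / c + ENNReal.ofReal B / (c / 2) := by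
    rw [hdecomp]; exact add_le_add hIntRn hSing'
  have hne : 2 * ν Set.univ + ENNReal.ofReal B / c + ENNReal.ofReal B / (c / 2) ≠ ⊤ := by
    refine ENNReal.add_ne_top.2 ⟨ENNReal.add_ne_top.2 ⟨?_, ?_⟩, ?_⟩
    · exact ENNReal.mul_ne_top (by norm_num) (measure_ne_top ν _)
    · exact (ENNReal.div_lt_top ENNReal.ofReal_ne_top hc_ne).ne
    · exact (ENNReal.div_lt_top ENNReal.ofReal_ne_top hc2_ne).ne
  exact ENNReal.toReal_le_toReal (ne_top_of_le_ne_top hne hfinal) hne |>.2 hfinal
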